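/- For all w, z ∈ A⁺, f̌(wz) = f̌(f̌(w) f̌(z)), where wz denotes concatenation of words and f̌(w) f̌(z) is concatenation of the words f̌(w), f̌(z) over the alphabet X = A ∪ A_G. -/

import Mathlib

open List

variable {A : Type*} {G : Type*} {A_G : Type*}

/-- `L̈`: the words not in `L` whose maximal proper prefix and suffix are in `L`. -/
def Ddot (L : Set (List A)) : Set (List A) :=
  {v | v ∉ L ∧ v.dropLast ∈ L ∧ v.tail ∈ L}

/-- `IsSc L w s` : `s` is the sequence of coordinates of `w` determined by `L`,
via the recursive construction of the paper: if `w ∈ L` then `s = (w)`; otherwise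
select an occurrence `w = w' v w''` of a factor `v ∈ L̈` and put
`s = sc_L[w' v_α] (v) sc_L[v_ω w'']`. -/
inductive IsSc (L : Set (List A)) : List A → List (List A) → Prop
  | base (w : List A) (hw : w ∈ L) : IsSc L w [w]
  | step (w' w'' v : List A) (s₁ s₂ : List (List A)) (hv : v ∈ Ddot L)
      (h₁ : IsSc L (w' ++ v.dropLast) s₁) (h₂ : IsSc L (v.tail ++ w'') s₂) :
      IsSc L (w' ++ v ++ w'') (s₁ ++ v :: s₂)

open Classical in
/-- `sc_L[w]`, the sequence of coordinates of `w` determined by `L`. -/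
noncomputable def scL (L : Set (List A)) (w : List A) : List (List A) :=
  if h : ∃ s, IsSc L w s then h.choose else []
section CoreG
variable [Group G]

/-- Evaluation of a word over `A_G` in the group `G`. -/
def evalW (evA : A_G → G) (u : List A_G) : G := (u.map evA).prod

/-- `f̂ : A* → G`. -/
noncomputable def fhat (L : Set (List A)) (f : List A → G) (w : List A) : G :=
  ((scL L w).map f).prod

/-- first coordinate (word part of `f̀`). -/
noncomputable def graveWord (L : Set (List A)) (w : List A) : List A :=
  (scL L w).headI

/-- group part of `f̀`. -/
noncomputable def graveG (L : Set (List A)) (f : List A → G) (w : List A) : G :=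
  ((scL L w).tail.map f).prod

/-- last coordinate (word part of `f́`). -/
noncomputable def acuteWord (L : Set (List A)) (w : List A) : List A :=
  (scL L w).getLastD []

/-- group part of `f́`. -/
noncomputable def acuteG (L : Set (List A)) (f : List A → G) (w : List A) : G :=
  ((scL L w).dropLast.map f).prod

/-- The word over `X = A ⊕ A_G` determined by a coordinate sequence:
`w₀ f(ẅ₁)f(w₁)⋯f(ẅ_m) w_m`, the middle group element written as its
chosen representative word over `A_G`. -/
def checkOfSeq (f : List A → G) (rep : G → List A_G) :
    List (List A) → List (A ⊕ A_G)
  | [] => []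
  | [w] => w.map Sum.inl
  | w :: rest =>
      w.map Sum.inl ++ (rep ((rest.dropLast.map f).prod)).map Sum.inr ++
        (rest.getLastD []).map Sum.inl

/-- longest prefix of `A`-letters. -/
def takeA : List (A ⊕ A_G) → List A
  | Sum.inl a :: r => a :: takeA r
  | _ => []

def dropA : List (A ⊕ A_G) → List (A ⊕ A_G)
  | Sum.inl _ :: r => dropA r
  | w => w

/-- longest prefix of `A_G`-letters. -/
def takeG : List (A ⊕ A_G) → List A_G
  | Sum.inr b :: r => b :: takeG r
  | _ => []

def dropG : List (A ⊕ A_G) → List (A ⊕ A_G)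
  | Sum.inr _ :: r => dropG r
  | w => w

/-- Processing of the part `g₁u₁g₂u₂⋯g_nu_n` of a mixed word: returns the group
element `eval(g₁)·f̂(u₁)·…·eval(g_n)·(acute part of u_n)` together with the final
word coordinate of `u_n`.  (Fuel-based recursion.) -/
noncomputable def midRunAux (L : Set (List A)) (f : List A → G) (evA : A_G → G) :
    ℕ → List (A ⊕ A_G) → G × List A
  | 0, _ => (1, [])
  | n + 1, w =>
      match dropA (dropG w) with
      | [] => (evalW evA (takeG w) * acuteG L f (takeA (dropG w)),
               acuteWord L (takeA (dropG w)))
      | r' => (evalW evA (takeG w) * fhat L f (takeA (dropG w)) *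
                 (midRunAux L f evA n r').1,
               (midRunAux L f evA n r').2)

/-- The extension `f̌ : X⁺ → Z ⊆ X⁺` of `f̌` to mixed words
(`f̌(u₀g₁u₁⋯g_nu_n) = f̀(u₀) g₁ f̂(u₁) ⋯ g_n f́(u_n)`, the middle group
element written as its representative word). -/
noncomputable def fcheckX (L : Set (List A)) (f : List A → G) (evA : A_G → G)
    (rep : G → List A_G) (w : List (A ⊕ A_G)) : List (A ⊕ A_G) :=
  match dropA w with
  | [] => checkOfSeq f rep (scL L (takeA w))
  | r =>
      (graveWord L (takeA w)).map Sum.inl ++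
        (rep (graveG L f (takeA w) * (midRunAux L f evA r.length r).1)).map Sum.inr ++
        (midRunAux L f evA r.length r).2.map Sum.inl

end CoreG

section Seg
variable {α : Type*}

/-- the factor `l[a..b)`. -/
def seg (l : List α) (a b : ℕ) : List α := (l.drop a).take (b - a)

theorem seg_append (l : List α) {a b c : ℕ} (hab : a ≤ b) (hbc : b ≤ c) :
    seg l a c = seg l a b ++ seg l b c := by
  unfold seg
  have h : c - a = (b - a) + (c - b) := by omega
  rw [h, List.take_add, List.drop_drop]
  congr 3
  omega

theorem seg_infix (l : List α) {a b a' b' : ℕ} (ha : a' ≤ a) (hb : b ≤ b') :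
    seg l a b <:+: seg l a' b' := by
  unfold seg
  have h1 : ((l.drop a').take (b' - a')).drop (a - a') =
      (l.drop a).take (b - a) ++ ((l.drop a).drop (b-a)).take ((b' - a) - (b - a)) := by
    rw [List.drop_take, List.drop_drop]
    have h2 : a' + (a - a') = a := by omega
    rw [h2]
    have h3 : b' - a' - (a - a') = (b - a) + ((b' - a) - (b - a)) := by omega
    rw [h3, List.take_add]
  refine ⟨((l.drop a').take (b' - a')).take (a - a'),
    ((l.drop a).drop (b-a)).take ((b' - a) - (b - a)), ?_⟩
  rw [List.append_assoc, ← h1, List.take_append_drop]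

theorem seg_fst (P V Q : List α) : seg (P ++ V ++ Q) 0 P.length = P := by
  unfold seg
  rw [List.drop_zero, Nat.sub_zero, List.append_assoc, List.take_left]

theorem seg_mid (P V Q : List α) :
    seg (P ++ V ++ Q) P.length (P.length + V.length) = V := by
  unfold seg
  rw [List.append_assoc, List.drop_left]
  simp [List.take_left]

theorem seg_lst (P V Q : List α) :
    seg (P ++ V ++ Q) (P.length + V.length) (P ++ V ++ Q).length = Q := by
  unfold seg
  rw [← List.length_append, List.drop_left]
  apply List.take_of_length_le
  simp; omega

theorem tail_take (l : List α) (n : ℕ) : (l.take n).tail = l.tail.take (n - 1) := by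
  cases l with
  | nil => simp
  | cons x xs => cases n <;> simp

end Seg
section IsScBasic
variable {A : Type*} {L : Set (List A)}

theorem getLastD_append_cons {β : Type*} :
    ∀ (l₁ : List β) (x : β) (xs : List β) (d : β),
      (l₁ ++ x :: xs).getLastD d = (x :: xs).getLastD d
  | [], x, xs, d => rfl
  | a :: l₁, x, xs, d => by
      rw [List.cons_append, List.getLastD_cons, getLastD_append_cons,
        List.getLastD_cons, List.getLastD_cons]

theorem ddot_two (hE : ([] : List A) ∉ L) {v : List A} (hv : v ∈ Ddot L) :
    2 ≤ v.length := by
  match v with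
  | [] => exact absurd hv.2.1 hE
  | [a] => exact absurd hv.2.1 hE
  | a :: b :: t => simp

theorem isc_ne {w : List A} {s : List (List A)} (h : IsSc L w s) : s ≠ [] := by
  cases h with
  | base => simp
  | step => simp

theorem isc_head_mem {w : List A} {s : List (List A)} (h : IsSc L w s) :
    s.headI ∈ L := by
  induction h with
  | base w hw => exact hw
  | step p q v s₁ s₂ hv h₁ h₂ ih₁ ih₂ =>
      cases s₁ with
      | nil => exact absurd rfl (isc_ne h₁)
      | cons x xs => exact ih₁

theorem isc_last_mem {w : List A} {s : List (List A)} (h : IsSc L w s) :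
    s.getLastD [] ∈ L := by
  induction h with
  | base w hw => exact hw
  | step p q v s₁ s₂ hv h₁ h₂ ih₁ ih₂ =>
      cases s₂ with
      | nil => exact absurd rfl (isc_ne h₂)
      | cons x xs =>
          rwa [show s₁ ++ v :: x :: xs = (s₁ ++ [v]) ++ x :: xs by simp,
            getLastD_append_cons]

theorem isc_word_ne (hE : ([] : List A) ∉ L) {w : List A} {s : List (List A)}
    (h : IsSc L w s) : w ≠ [] := by
  cases h with
  | base w hw => intro he; exact hE (he ▸ hw)
  | step p q v s₁ s₂ hv h₁ h₂ =>
      have := ddot_two hE hv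
      intro he
      have h2 := congrArg List.length he
      simp only [List.length_append, List.length_nil] at h2
      omega

theorem isc_singleton {w c : List A} (h : IsSc L w [c]) : c = w ∧ w ∈ L := by
  generalize hs : [c] = s at *
  cases h with
  | base w hw => cases hs; exact ⟨rfl, hw⟩
  | step p q v s₁ s₂ hv h₁ h₂ =>
      exfalso
      cases s₁ with
      | nil => exact absurd rfl (isc_ne h₁)
      | cons x xs => simp at hs

theorem exists_decomp (hE : ([] : List A) ∉ L) (hA : ∀ a : A, [a] ∈ L) :
    ∀ n (w : List A), w.length ≤ n → w ≠ [] → w ∉ L →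
      ∃ p v q, v ∈ Ddot L ∧ w = p ++ v ++ q := by
  intro n
  induction n with
  | zero =>
      intro w hl hne _
      exact absurd (List.eq_nil_of_length_eq_zero (Nat.le_zero.1 hl)) hne
  | succ n IH =>
      intro w hl hne hw
      obtain ⟨a, w', rfl⟩ : ∃ a w', w = a :: w' := by
        cases w with
        | nil => exact absurd rfl hne
        | cons a w' => exact ⟨a, w', rfl⟩
      cases w' with
      | nil => exact absurd (hA a) hw
      | cons b t =>
        by_cases hd : (a :: b :: t).dropLast ∈ L
        · by_cases ht : (b :: t) ∈ L
          · exact ⟨[], a::b::t, [], ⟨hw, hd, ht⟩, by simp⟩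
          · obtain ⟨p, v, q, hv, he⟩ := IH (b :: t)
              (by simp at hl ⊢; omega) (by simp) ht
            exact ⟨a :: p, v, q, hv, by rw [show a :: b :: t = a :: (b :: t) from rfl, he]; simp⟩
        · obtain ⟨p, v, q, hv, he⟩ := IH (a :: b :: t).dropLast
            (by simp [List.length_dropLast] at hl ⊢; omega) (by simp) hd
          refine ⟨p, v, q ++ [(a :: b :: t).getLast (by simp)], hv, ?_⟩
          conv_lhs => rw [← List.dropLast_append_getLast (l := a :: b :: t) (by simp)]
          rw [he]; simp

theorem isc_exists (hE : ([] : List A) ∉ L) (hA : ∀ a : A, [a] ∈ L) :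
    ∀ n (w : List A), w.length ≤ n → w ≠ [] → ∃ s, IsSc L w s := by
  intro n
  induction n with
  | zero =>
      intro w hl hne
      exact absurd (List.eq_nil_of_length_eq_zero (Nat.le_zero.1 hl)) hne
  | succ n IH =>
      intro w hl hne
      by_cases hw : w ∈ L
      · exact ⟨[w], .base w hw⟩
      · obtain ⟨p, v, q, hv, rfl⟩ := exists_decomp hE hA (n+1) w hl hne hw
        have h2 := ddot_two hE hv
        simp only [List.length_append] at hl
        obtain ⟨s₁, hs₁⟩ := IH (p ++ v.dropLast)
          (by simp [List.length_dropLast]; omega)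
          (List.ne_nil_of_length_pos (by simp; omega))
        obtain ⟨s₂, hs₂⟩ := IH (v.tail ++ q)
          (by simp [List.length_tail]; omega)
          (List.ne_nil_of_length_pos (by simp [List.length_tail]; omega))
        exact ⟨_, .step p q v s₁ s₂ hv hs₁ hs₂⟩

end IsScBasic
section SegMore
variable {α : Type*}

theorem seg_tail (l : List α) (a b : ℕ) : (seg l a b).tail = seg l (a+1) b := by
  unfold seg
  rw [tail_take, List.tail_drop, Nat.sub_sub]

theorem seg_dropLast (l : List α) {a b : ℕ} (hb : b ≤ l.length) :
    (seg l a b).dropLast = seg l a (b-1) := by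
  unfold seg
  rw [List.dropLast_eq_take, List.take_take]
  congr 1
  simp [List.length_take, List.length_drop]
  omega

theorem seg_length (l : List α) (a b : ℕ) :
    (seg l a b).length = min (b - a) (l.length - a) := by
  simp [seg]

end SegMore

section Unique
variable {A : Type*} {L : Set (List A)}

theorem key_lemma (hE : ([] : List A) ∉ L)
    (hFac : ∀ u w : List A, w ∈ L → u ≠ [] → u <:+: w → u ∈ L)
    (hA : ∀ a : A, [a] ∈ L) {n : ℕ}
    (IH : ∀ (w : List A) s t, w.length ≤ n → IsSc L w s → IsSc L w t → s = t)
    {p₁ v q₁ p₂ u q₂ : List A} {s₁ s₂ t₁ t₂ : List (List A)}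
    (heq : p₁ ++ v ++ q₁ = p₂ ++ u ++ q₂)
    (hlen : (p₁ ++ v ++ q₁).length ≤ n + 1)
    (hv : v ∈ Ddot L) (hu : u ∈ Ddot L)
    (hs₁ : IsSc L (p₁ ++ v.dropLast) s₁) (hs₂ : IsSc L (v.tail ++ q₁) s₂)
    (ht₁ : IsSc L (p₂ ++ u.dropLast) t₁) (ht₂ : IsSc L (u.tail ++ q₂) t₂)
    (hj : p₁.length + v.length < p₂.length + u.length) :
    s₁ ++ v :: s₂ = t₁ ++ u :: t₂ := by
  have hL := congrArg List.length heq
  simp only [List.length_append] at hL hlen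
  have h2v : 2 ≤ v.length := ddot_two hE hv
  have h2u : 2 ≤ u.length := ddot_two hE hu
  have hvne : v ≠ [] := List.ne_nil_of_length_pos (by omega)
  have hune : u ≠ [] := List.ne_nil_of_length_pos (by omega)
  have hWl : (p₁ ++ v ++ q₁).length = p₁.length + v.length + q₁.length := by
    simp only [List.length_append]
  have eV : seg (p₁ ++ v ++ q₁) p₁.length (p₁.length + v.length) = v :=
    seg_mid p₁ v q₁
  have eU : seg (p₁ ++ v ++ q₁) p₂.length (p₂.length + u.length) = u := by
    rw [heq]; exact seg_mid p₂ u q₂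
  have eQ₁ : seg (p₁ ++ v ++ q₁) (p₁.length + v.length) (p₁ ++ v ++ q₁).length = q₁ :=
    seg_lst p₁ v q₁
  have eQ₂ : seg (p₁ ++ v ++ q₁) (p₂.length + u.length) (p₁ ++ v ++ q₁).length = q₂ := by
    rw [heq]; exact seg_lst p₂ u q₂
  have eP₁ : seg (p₁ ++ v ++ q₁) 0 p₁.length = p₁ := seg_fst p₁ v q₁
  have eP₂ : seg (p₁ ++ v ++ q₁) 0 p₂.length = p₂ := by
    rw [heq]; exact seg_fst p₂ u q₂
  have eVt : seg (p₁ ++ v ++ q₁) (p₁.length + 1) (p₁.length + v.length) = v.tail := by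
    have h := seg_tail (p₁ ++ v ++ q₁) p₁.length (p₁.length + v.length)
    rw [eV] at h
    exact h.symm
  have eUt : seg (p₁ ++ v ++ q₁) (p₂.length + 1) (p₂.length + u.length) = u.tail := by
    have h := seg_tail (p₁ ++ v ++ q₁) p₂.length (p₂.length + u.length)
    rw [eU] at h
    exact h.symm
  have eVd : seg (p₁ ++ v ++ q₁) p₁.length (p₁.length + v.length - 1) = v.dropLast := by
    have h := seg_dropLast (p₁ ++ v ++ q₁) (a := p₁.length)
      (b := p₁.length + v.length) (by rw [hWl]; omega)
    rw [eV] at h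
    exact h.symm
  have eUd : seg (p₁ ++ v ++ q₁) p₂.length (p₂.length + u.length - 1) = u.dropLast := by
    have h := seg_dropLast (p₁ ++ v ++ q₁) (a := p₂.length)
      (b := p₂.length + u.length) (by rw [hWl]; omega)
    rw [eU] at h
    exact h.symm
  have hi : p₁.length + 1 ≤ p₂.length := by
    by_contra hcon
    push_neg at hcon
    have hinf : v <:+: u.dropLast := by
      rw [← eV, ← eUd]
      exact seg_infix _ (by omega) (by omega)
    exact hv.1 (hFac v u.dropLast hu.2.1 hvne hinf)
  have hjW : (p₂.length + u.length) ≤ (p₁ ++ v ++ q₁).length := by omega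
  have hmidne : seg (p₁ ++ v ++ q₁) ((p₁.length + 1)) ((p₂.length + u.length - 1)) ≠ [] :=
    List.ne_nil_of_length_pos
      (by rw [seg_length]; simp only [List.length_append, lt_min_iff]; omega)
  obtain ⟨c, hc⟩ := isc_exists hE hA (seg (p₁ ++ v ++ q₁) ((p₁.length + 1)) ((p₂.length + u.length - 1))).length _ le_rfl hmidne
  have c1 : seg (p₁ ++ v ++ q₁) ((p₁.length + 1)) (p₁ ++ v ++ q₁).length = seg (p₁ ++ v ++ q₁) ((p₁.length + 1)) (p₁.length + v.length) ++ seg (p₁ ++ v ++ q₁) (p₁.length + v.length) (p₁ ++ v ++ q₁).length :=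
    seg_append _ (by first | omega | (simp only [List.length_append]; omega)) (by first | omega | (simp only [List.length_append]; omega))
  have c2 : seg (p₁ ++ v ++ q₁) ((p₁.length + 1)) (p₁ ++ v ++ q₁).length = seg (p₁ ++ v ++ q₁) ((p₁.length + 1)) p₂.length ++ seg (p₁ ++ v ++ q₁) p₂.length (p₁ ++ v ++ q₁).length :=
    seg_append _ (by first | omega | (simp only [List.length_append]; omega)) (by first | omega | (simp only [List.length_append]; omega))
  have c3 : seg (p₁ ++ v ++ q₁) p₂.length (p₁ ++ v ++ q₁).length = seg (p₁ ++ v ++ q₁) p₂.length (p₂.length + u.length) ++ seg (p₁ ++ v ++ q₁) (p₂.length + u.length) (p₁ ++ v ++ q₁).length :=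
    seg_append _ (by first | omega | (simp only [List.length_append]; omega)) (by first | omega | (simp only [List.length_append]; omega))
  have e1 : v.tail ++ q₁ = seg (p₁ ++ v ++ q₁) ((p₁.length + 1)) p₂.length ++ u ++ q₂ := by
    rw [eVt, eQ₁] at c1
    rw [c3, eU, eQ₂] at c2
    rw [← c1, c2, ← List.append_assoc]
  have d1 : seg (p₁ ++ v ++ q₁) ((p₁.length + 1)) ((p₂.length + u.length - 1)) = seg (p₁ ++ v ++ q₁) ((p₁.length + 1)) (p₁.length + v.length) ++ seg (p₁ ++ v ++ q₁) (p₁.length + v.length) ((p₂.length + u.length - 1)) :=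
    seg_append _ (by first | omega | (simp only [List.length_append]; omega)) (by first | omega | (simp only [List.length_append]; omega))
  have d2 : seg (p₁ ++ v ++ q₁) ((p₁.length + 1)) ((p₂.length + u.length - 1)) = seg (p₁ ++ v ++ q₁) ((p₁.length + 1)) p₂.length ++ seg (p₁ ++ v ++ q₁) p₂.length ((p₂.length + u.length - 1)) :=
    seg_append _ (by first | omega | (simp only [List.length_append]; omega)) (by first | omega | (simp only [List.length_append]; omega))
  have f1 : seg (p₁ ++ v ++ q₁) 0 ((p₂.length + u.length - 1)) = seg (p₁ ++ v ++ q₁) 0 p₂.length ++ seg (p₁ ++ v ++ q₁) p₂.length ((p₂.length + u.length - 1)) :=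
    seg_append _ (by first | omega | (simp only [List.length_append]; omega)) (by first | omega | (simp only [List.length_append]; omega))
  have f2 : seg (p₁ ++ v ++ q₁) 0 ((p₂.length + u.length - 1)) = seg (p₁ ++ v ++ q₁) 0 p₁.length ++ seg (p₁ ++ v ++ q₁) p₁.length ((p₂.length + u.length - 1)) :=
    seg_append _ (by first | omega | (simp only [List.length_append]; omega)) (by first | omega | (simp only [List.length_append]; omega))
  have f3 : seg (p₁ ++ v ++ q₁) p₁.length ((p₂.length + u.length - 1)) = seg (p₁ ++ v ++ q₁) p₁.length (p₁.length + v.length) ++ seg (p₁ ++ v ++ q₁) (p₁.length + v.length) ((p₂.length + u.length - 1)) :=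
    seg_append _ (by first | omega | (simp only [List.length_append]; omega)) (by first | omega | (simp only [List.length_append]; omega))
  have e2 : p₂ ++ u.dropLast = p₁ ++ v ++ seg (p₁ ++ v ++ q₁) (p₁.length + v.length) ((p₂.length + u.length - 1)) := by
    rw [eP₂, eUd] at f1
    rw [f3, eP₁, eV] at f2
    rw [← f1, f2, ← List.append_assoc]
  have hc1 := hc
  rw [d1, eVt] at hc1
  have hc2 := hc
  rw [d2, eUd] at hc2
  have d1' : IsSc L (p₂ ++ u.dropLast) (s₁ ++ v :: c) := by
    rw [e2]
    exact .step p₁ _ v s₁ c hv hs₁ hc1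
  have ht1' : t₁ = s₁ ++ v :: c := by
    refine IH _ _ _ ?_ ht₁ d1'
    simp only [List.length_append, List.length_dropLast]
    omega
  have d2' : IsSc L (v.tail ++ q₁) (c ++ u :: t₂) := by
    rw [e1]
    exact .step _ q₂ u c t₂ hu hc2 ht₂
  have hs2' : s₂ = c ++ u :: t₂ := by
    refine IH _ _ _ ?_ hs₂ d2'
    simp only [List.length_append, List.length_tail]
    omega
  rw [ht1', hs2']
  simp

theorem isc_unique (hE : ([] : List A) ∉ L)
    (hFac : ∀ u w : List A, w ∈ L → u ≠ [] → u <:+: w → u ∈ L)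
    (hA : ∀ a : A, [a] ∈ L) :
    ∀ n (w : List A) (s t : List (List A)), w.length ≤ n →
      IsSc L w s → IsSc L w t → s = t := by
  intro n
  induction n with
  | zero =>
      intro w s t hl hs ht
      exact absurd (List.eq_nil_of_length_eq_zero (Nat.le_zero.1 hl))
        (isc_word_ne hE hs)
  | succ n IH =>
      intro w s t hl hs ht
      cases hs with
      | base w hw =>
          cases ht with
          | base => rfl
          | step p₂ q₂ u t₁ t₂ hu g₁ g₂ =>
              have hune : u ≠ [] :=
                List.ne_nil_of_length_pos (by have := ddot_two hE hu; omega)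
              exact absurd (hFac u _ hw hune ⟨p₂, q₂, rfl⟩) hu.1
      | step p₁ q₁ v s₁ s₂ hv h₁ h₂ =>
          have hl' : (p₁ ++ v ++ q₁).length ≤ n + 1 := hl
          generalize hgen : p₁ ++ v ++ q₁ = W at ht
          cases ht with
          | base W hw =>
              have hvne : v ≠ [] :=
                List.ne_nil_of_length_pos (by have := ddot_two hE hv; omega)
              refine absurd (hFac v W hw hvne ?_) hv.1
              exact ⟨p₁, q₁, hgen⟩
          | step p₂ q₂ u t₁ t₂ hu g₁ g₂ =>
              rcases Nat.lt_trichotomy (p₁.length + v.length)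
                (p₂.length + u.length) with hlt | heqj | hgt
              · exact key_lemma hE hFac hA IH hgen hl' hv hu h₁ h₂ g₁ g₂ hlt
              · -- equal right endpoints: same occurrence
                have hL := congrArg List.length hgen
                simp only [List.length_append] at hL hl'
                have h2v : 2 ≤ v.length := ddot_two hE hv
                have h2u : 2 ≤ u.length := ddot_two hE hu
                rcases Nat.lt_trichotomy p₁.length p₂.length with hi | hi | hi
                · exfalso
                  have eU : seg (p₁ ++ v ++ q₁) p₂.length (p₂.length + u.length) = u := by
                    rw [hgen]; exact seg_mid p₂ u q₂
                  have eVt : seg (p₁ ++ v ++ q₁) (p₁.length + 1) (p₁.length + v.length) = v.tail := by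
                    have h := seg_tail (p₁ ++ v ++ q₁) p₁.length (p₁.length + v.length)
                    rw [seg_mid p₁ v q₁] at h
                    exact h.symm
                  have hinf : u <:+: v.tail := by
                    rw [← eU, ← eVt]
                    exact seg_infix _ (by omega) (by omega)
                  exact absurd (hFac u v.tail hv.2.2
                    (List.ne_nil_of_length_pos (by omega)) hinf) hu.1
                · have e1 : p₁ = p₂ := by
                    rw [← seg_fst p₁ v q₁, hi, hgen]
                    exact seg_fst p₂ u q₂
                  have e2 : v = u := by
                    rw [← seg_mid p₁ v q₁, heqj, hi, hgen]
                    exact seg_mid p₂ u q₂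
                  have e3 : q₁ = q₂ := by
                    rw [← seg_lst p₁ v q₁, heqj, hgen]
                    exact seg_lst p₂ u q₂
                  rw [← e1, ← e2] at g₁
                  rw [← e2, ← e3] at g₂
                  have a1 : s₁ = t₁ := by
                    refine IH _ _ _ ?_ h₁ g₁
                    simp only [List.length_append, List.length_dropLast]
                    omega
                  have a2 : s₂ = t₂ := by
                    refine IH _ _ _ ?_ h₂ g₂
                    simp only [List.length_append, List.length_tail]
                    omega
                  rw [a1, a2, e2]
                · exfalso
                  have eUt : seg (p₁ ++ v ++ q₁) (p₂.length + 1) (p₂.length + u.length) = u.tail := by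
                    have h := seg_tail (p₁ ++ v ++ q₁) p₂.length (p₂.length + u.length)
                    rw [show seg (p₁ ++ v ++ q₁) p₂.length (p₂.length + u.length) = u by
                      rw [hgen]; exact seg_mid p₂ u q₂] at h
                    exact h.symm
                  have hinf : v <:+: u.tail := by
                    rw [← seg_mid p₁ v q₁, ← eUt]
                    exact seg_infix _ (by omega) (by omega)
                  exact absurd (hFac v u.tail hu.2.2
                    (List.ne_nil_of_length_pos (by omega)) hinf) hv.1
              · exact (key_lemma hE hFac hA IH hgen.symm
                  (by rw [← hgen]; exact hl') hu hv g₁ g₂ h₁ h₂ hgt).symm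

end Unique
section Glue
variable {A : Type*} {L : Set (List A)}

theorem scL_eq (hE : ([] : List A) ∉ L)
    (hFac : ∀ u w : List A, w ∈ L → u ≠ [] → u <:+: w → u ∈ L)
    (hA : ∀ a : A, [a] ∈ L) {w : List A} {s : List (List A)}
    (h : IsSc L w s) : scL L w = s := by
  unfold scL
  rw [dif_pos ⟨s, h⟩]
  exact isc_unique hE hFac hA w.length w _ _ le_rfl
    (Exists.choose_spec (⟨s, h⟩ : ∃ s, IsSc L w s)) h

theorem glueL {z : List A} {t : List (List A)} (h : IsSc L z t) :
    ∀ w m, IsSc L (w ++ t.headI) m → IsSc L (w ++ z) (m ++ t.tail) := by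
  induction h with
  | base z hz => intro w m hm; simpa using hm
  | step z' z'' u t₁ t₂ hu h₁ h₂ ih₁ ih₂ =>
      intro w m hm
      obtain ⟨x, xs, rfl⟩ : ∃ x xs, t₁ = x :: xs := by
        cases t₁ with
        | nil => exact absurd rfl (isc_ne h₁)
        | cons x xs => exact ⟨x, xs, rfl⟩
      simp only [List.cons_append, List.headI_cons, List.tail_cons] at hm ⊢
      have h3 := ih₁ w m (by simpa using hm)
      simp only [List.headI_cons, List.tail_cons] at h3
      have h4 := IsSc.step (w ++ z') z'' u (m ++ xs) t₂ hu
        (by rw [List.append_assoc]; exact h3) h₂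
      have e : w ++ (z' ++ u ++ z'') = w ++ z' ++ u ++ z'' := by
        simp [List.append_assoc]
      rw [e]
      have e2 : m ++ (x :: xs).tail ++ u :: t₂ = m ++ xs ++ u :: t₂ := by simp
      simpa [List.append_assoc] using h4

theorem glueR {w : List A} {s : List (List A)} (h : IsSc L w s) :
    ∀ z m, IsSc L (s.getLastD [] ++ z) m → IsSc L (w ++ z) (s.dropLast ++ m) := by
  induction h with
  | base w hw => intro z m hm; simpa using hm
  | step p q v s₁ s₂ hv h₁ h₂ ih₁ ih₂ =>
      intro z m hm
      obtain ⟨x, xs, rfl⟩ : ∃ x xs, s₂ = x :: xs := by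
        cases s₂ with
        | nil => exact absurd rfl (isc_ne h₂)
        | cons x xs => exact ⟨x, xs, rfl⟩
      have hglast : (s₁ ++ v :: x :: xs).getLastD [] = (x :: xs).getLastD [] := by
        rw [show s₁ ++ v :: x :: xs = (s₁ ++ [v]) ++ x :: xs by simp,
          getLastD_append_cons]
      rw [hglast] at hm
      have h3 := ih₂ z m hm
      have h4 := IsSc.step p (q ++ z) v s₁ ((x :: xs).dropLast ++ m) hv h₁
        (by rw [← List.append_assoc]; exact h3)
      have e : p ++ v ++ (q ++ z) = (p ++ v ++ q) ++ z := by
        simp [List.append_assoc]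
      rw [e] at h4
      have e2 : (s₁ ++ v :: x :: xs).dropLast ++ m
          = s₁ ++ v :: ((x :: xs).dropLast ++ m) := by
        rw [List.dropLast_append_of_ne_nil (l := v :: x :: xs) (by simp)]
        simp
      rw [e2]
      exact h4

theorem isc_glue {w z : List A} {s t m : List (List A)}
    (hs : IsSc L w s) (ht : IsSc L z t)
    (hm : IsSc L (s.getLastD [] ++ t.headI) m) :
    IsSc L (w ++ z) (s.dropLast ++ (m ++ t.tail)) :=
  glueR hs z (m ++ t.tail) (glueL ht (s.getLastD []) m hm)

end Glue
section Xside
variable {A : Type*} {G : Type*} {A_G : Type*}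

theorem takeA_nil : takeA ([] : List (A ⊕ A_G)) = [] := rfl

theorem takeA_map_inl_append (u : List A) (r : List (A ⊕ A_G)) :
    takeA (u.map Sum.inl ++ r) = u ++ takeA r := by
  induction u with
  | nil => simp
  | cons a t ih => simp [takeA, ih]

theorem dropA_map_inl_append (u : List A) (r : List (A ⊕ A_G)) :
    dropA (u.map Sum.inl ++ r) = dropA r := by
  induction u with
  | nil => simp
  | cons a t ih => simp [dropA, ih]

theorem takeA_map_inr_append {u : List A_G} (hu : u ≠ []) (r : List (A ⊕ A_G)) :
    takeA (u.map Sum.inr ++ r) = ([] : List A) := by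
  cases u with
  | nil => exact absurd rfl hu
  | cons b t => rfl

theorem dropA_map_inr_append {u : List A_G} (hu : u ≠ []) (r : List (A ⊕ A_G)) :
    dropA (u.map Sum.inr ++ r) = u.map Sum.inr ++ r := by
  cases u with
  | nil => exact absurd rfl hu
  | cons b t => rfl

theorem takeA_map_inl (u : List A) :
    takeA (u.map Sum.inl : List (A ⊕ A_G)) = u := by
  simpa [takeA] using takeA_map_inl_append (A_G := A_G) u []

theorem dropA_map_inl (u : List A) :
    dropA (u.map Sum.inl : List (A ⊕ A_G)) = [] := by
  simpa [dropA] using dropA_map_inl_append (A_G := A_G) u []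

theorem takeG_map_inr_append (u : List A_G) (r : List (A ⊕ A_G)) :
    takeG (u.map Sum.inr ++ r) = u ++ takeG r := by
  induction u with
  | nil => simp
  | cons a t ih => simp [takeG, ih]

theorem dropG_map_inr_append (u : List A_G) (r : List (A ⊕ A_G)) :
    dropG (u.map Sum.inr ++ r) = dropG r := by
  induction u with
  | nil => simp
  | cons a t ih => simp [dropG, ih]

theorem takeG_map_inl_append {u : List A} (hu : u ≠ []) (r : List (A ⊕ A_G)) :
    takeG (u.map Sum.inl ++ r) = ([] : List A_G) := by
  cases u with
  | nil => exact absurd rfl hu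
  | cons b t => rfl

theorem dropG_map_inl_append {u : List A} (hu : u ≠ []) (r : List (A ⊕ A_G)) :
    dropG (u.map Sum.inl ++ r) = u.map Sum.inl ++ r := by
  cases u with
  | nil => exact absurd rfl hu
  | cons b t => rfl

theorem takeG_map_inl (u : List A) :
    takeG (u.map Sum.inl : List (A ⊕ A_G)) = [] := by
  cases u <;> rfl

theorem dropG_map_inl (u : List A) :
    dropG (u.map Sum.inl : List (A ⊕ A_G)) = u.map Sum.inl := by
  cases u <;> rfl

variable [Group G]

theorem checkOfSeq_singleton (f : List A → G) (rep : G → List A_G) (u : List A) :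
    checkOfSeq f rep [u] = (u.map Sum.inl : List (A ⊕ A_G)) := rfl

theorem checkOfSeq_cons (f : List A → G) (rep : G → List A_G) (c : List A)
    {rest : List (List A)} (h : rest ≠ []) :
    checkOfSeq f rep (c :: rest) =
      c.map Sum.inl ++ (rep ((rest.dropLast.map f).prod)).map Sum.inr ++
        (rest.getLastD []).map Sum.inl := by
  cases rest with
  | nil => exact absurd rfl h
  | cons x xs => rfl

theorem fcheckX_of_dropA_nil (L : Set (List A)) (f : List A → G) (evA : A_G → G)
    (rep : G → List A_G) {W : List (A ⊕ A_G)} (h : dropA W = []) :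
    fcheckX L f evA rep W = checkOfSeq f rep (scL L (takeA W)) := by
  unfold fcheckX
  rw [h]

theorem fcheckX_of_dropA_cons (L : Set (List A)) (f : List A → G) (evA : A_G → G)
    (rep : G → List A_G) {W : List (A ⊕ A_G)} {x : A ⊕ A_G} {xs : List (A ⊕ A_G)}
    (h : dropA W = x :: xs) :
    fcheckX L f evA rep W =
      (graveWord L (takeA W)).map Sum.inl ++
        (rep (graveG L f (takeA W) *
          (midRunAux L f evA (x :: xs).length (x :: xs)).1)).map Sum.inr ++
        (midRunAux L f evA (x :: xs).length (x :: xs)).2.map Sum.inl := by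
  unfold fcheckX
  rw [h]

theorem midRunAux_succ_nil (L : Set (List A)) (f : List A → G) (evA : A_G → G)
    (n : ℕ) {W : List (A ⊕ A_G)} (h : dropA (dropG W) = []) :
    midRunAux L f evA (n+1) W =
      (evalW evA (takeG W) * acuteG L f (takeA (dropG W)),
        acuteWord L (takeA (dropG W))) := by
  rw [midRunAux.eq_2, h]

theorem midRunAux_succ_cons (L : Set (List A)) (f : List A → G) (evA : A_G → G)
    (n : ℕ) {W : List (A ⊕ A_G)} {x : A ⊕ A_G} {xs : List (A ⊕ A_G)}
    (h : dropA (dropG W) = x :: xs) :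
    midRunAux L f evA (n+1) W =
      (evalW evA (takeG W) * fhat L f (takeA (dropG W)) *
        (midRunAux L f evA n (x :: xs)).1,
       (midRunAux L f evA n (x :: xs)).2) := by
  rw [midRunAux.eq_2, h]

end Xside
section Mid
variable {A : Type*} {G : Type*} {A_G : Type*} [Group G]

theorem midRun_last (L : Set (List A)) (f : List A → G) (evA : A_G → G)
    (hg : List A_G) (u : List A) {n : ℕ} (hn : 1 ≤ n) :
    midRunAux L f evA n (hg.map Sum.inr ++ u.map Sum.inl) =
      (evalW evA hg * acuteG L f u, acuteWord L u) := by
  obtain ⟨n, rfl⟩ : ∃ m, n = m + 1 := ⟨n - 1, by omega⟩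
  have h : dropA (dropG (hg.map Sum.inr ++ u.map Sum.inl)) = [] := by
    rw [dropG_map_inr_append, dropG_map_inl, dropA_map_inl]
  rw [midRunAux_succ_nil _ _ _ _ h, takeG_map_inr_append, takeG_map_inl,
    dropG_map_inr_append, dropG_map_inl, takeA_map_inl]
  simp

theorem midRun_two (L : Set (List A)) (f : List A → G) (evA : A_G → G)
    (hg hg₂ : List A_G) (u v : List A) (hu : u ≠ []) (hg₂ne : hg₂ ≠ [])
    {n : ℕ} (hn : 2 ≤ n) :
    midRunAux L f evA n
        (hg.map Sum.inr ++ (u.map Sum.inl ++ (hg₂.map Sum.inr ++ v.map Sum.inl))) =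
      (evalW evA hg * fhat L f u * (evalW evA hg₂ * acuteG L f v),
        acuteWord L v) := by
  obtain ⟨n, rfl⟩ : ∃ m, n = m + 1 + 1 := ⟨n - 2, by omega⟩
  obtain ⟨b, bs, rfl⟩ : ∃ b bs, hg₂ = b :: bs := by
    cases hg₂ with
    | nil => exact absurd rfl hg₂ne
    | cons b bs => exact ⟨b, bs, rfl⟩
  have hdg : dropG (hg.map Sum.inr ++ (u.map Sum.inl ++
      ((b :: bs).map Sum.inr ++ v.map Sum.inl))) =
      u.map Sum.inl ++ ((b :: bs).map Sum.inr ++ v.map Sum.inl) := by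
    rw [dropG_map_inr_append, dropG_map_inl_append hu]
  have h : dropA (dropG (hg.map Sum.inr ++ (u.map Sum.inl ++
      ((b :: bs).map Sum.inr ++ v.map Sum.inl)))) =
      Sum.inr b :: (bs.map Sum.inr ++ v.map Sum.inl) := by
    rw [hdg, dropA_map_inl_append, dropA_map_inr_append (by simp)]
    simp
  rw [midRunAux_succ_cons _ _ _ _ h]
  have h2 : (Sum.inr b : A ⊕ A_G) :: (bs.map Sum.inr ++ v.map Sum.inl) =
      (b :: bs).map Sum.inr ++ v.map Sum.inl := by simp
  rw [h2, midRun_last L f evA (b :: bs) v (by omega)]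
  rw [takeG_map_inr_append, takeG_map_inl_append hu, hdg,
    takeA_map_inl_append, takeA_map_inr_append (by simp)]
  simp

end Mid

section TrivialSc
variable {A : Type*} {G : Type*} {A_G : Type*} [Group G] {L : Set (List A)}

theorem scL_of_mem (hE : ([] : List A) ∉ L)
    (hFac : ∀ u w : List A, w ∈ L → u ≠ [] → u <:+: w → u ∈ L)
    (hA : ∀ a : A, [a] ∈ L) {w : List A} (hw : w ∈ L) : scL L w = [w] :=
  scL_eq hE hFac hA (.base w hw)

theorem graveWord_of_mem (hE : ([] : List A) ∉ L)
    (hFac : ∀ u w : List A, w ∈ L → u ≠ [] → u <:+: w → u ∈ L)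
    (hA : ∀ a : A, [a] ∈ L) {w : List A} (hw : w ∈ L) : graveWord L w = w := by
  unfold graveWord; rw [scL_of_mem hE hFac hA hw]; rfl

theorem graveG_of_mem (hE : ([] : List A) ∉ L)
    (hFac : ∀ u w : List A, w ∈ L → u ≠ [] → u <:+: w → u ∈ L)
    (hA : ∀ a : A, [a] ∈ L) (f : List A → G) {w : List A} (hw : w ∈ L) :
    graveG L f w = 1 := by
  unfold graveG; rw [scL_of_mem hE hFac hA hw]; rfl

theorem acuteWord_of_mem (hE : ([] : List A) ∉ L)
    (hFac : ∀ u w : List A, w ∈ L → u ≠ [] → u <:+: w → u ∈ L)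
    (hA : ∀ a : A, [a] ∈ L) {w : List A} (hw : w ∈ L) : acuteWord L w = w := by
  unfold acuteWord; rw [scL_of_mem hE hFac hA hw]; rfl

theorem acuteG_of_mem (hE : ([] : List A) ∉ L)
    (hFac : ∀ u w : List A, w ∈ L → u ≠ [] → u <:+: w → u ∈ L)
    (hA : ∀ a : A, [a] ∈ L) (f : List A → G) {w : List A} (hw : w ∈ L) :
    acuteG L f w = 1 := by
  unfold acuteG; rw [scL_of_mem hE hFac hA hw]; rfl

end TrivialSc

/-- Lemma 1(2). For all `w, z ∈ A⁺`,
`f̌(wz) = f̌(f̌(w) f̌(z))`, where `wz` is concatenation of words over `A` and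
`f̌(w) f̌(z)` is concatenation of the words `f̌(w), f̌(z)` over `X = A ⊕ A_G`. -/
theorem fcheck_append [Nonempty A] [Group G]
    (L : Set (List A)) (hE : [] ∉ L)
    (hFac : ∀ u w : List A, w ∈ L → u ≠ [] → u <:+: w → u ∈ L)
    (hA : ∀ a : A, [a] ∈ L)
    (f : List A → G) (evA : A_G → G) (rep : G → List A_G)
    (hrepne : ∀ g : G, rep g ≠ [])
    (hrep : ∀ g : G, evalW evA (rep g) = g)
    (w z : List A) (hw : w ≠ []) (hz : z ≠ []) :
    checkOfSeq f rep (scL L (w ++ z)) =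
      fcheckX L f evA rep
        (checkOfSeq f rep (scL L w) ++ checkOfSeq f rep (scL L z)) := by
  obtain ⟨s, hs⟩ := isc_exists hE hA w.length w le_rfl hw
  obtain ⟨t, ht⟩ := isc_exists hE hA z.length z le_rfl hz
  have hsw : scL L w = s := scL_eq hE hFac hA hs
  have htz : scL L z = t := scL_eq hE hFac hA ht
  have ha : s.getLastD [] ∈ L := isc_last_mem hs
  have hb : t.headI ∈ L := isc_head_mem ht
  have hane : s.getLastD [] ≠ [] := fun h => hE (h ▸ ha)
  have hbne : t.headI ≠ [] := fun h => hE (h ▸ hb)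
  obtain ⟨m, hm⟩ := isc_exists hE hA (s.getLastD [] ++ t.headI).length _ le_rfl
    (fun hc => hane (List.append_eq_nil_iff.1 hc).1)
  have hwz : scL L (w ++ z) = s.dropLast ++ (m ++ t.tail) :=
    scL_eq hE hFac hA (isc_glue hs ht hm)
  have hmm : scL L (s.getLastD [] ++ t.headI) = m := scL_eq hE hFac hA hm
  have hmne : m ≠ [] := isc_ne hm
  rw [hsw, htz, hwz]
  cases s with
  | nil => exact absurd rfl (isc_ne hs)
  | cons c s' =>
  cases t with
  | nil => exact absurd rfl (isc_ne ht)
  | cons b t' =>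
  have hcL : c ∈ L := isc_head_mem hs
  cases s' with
  | nil =>
    -- `w` is in `L`, `s = [c]`
    simp only [List.getLastD_cons, List.getLastD_nil] at hmm hane ha
    cases t' with
    | nil =>
      -- Case A : both in L
      simp only [List.headI_cons] at hmm
      rw [show ([c] : List (List A)).dropLast ++ (m ++ ([b] : List (List A)).tail)
          = m by simp,
        checkOfSeq_singleton, checkOfSeq_singleton,
        show (c.map Sum.inl ++ b.map Sum.inl : List (A ⊕ A_G))
          = (c ++ b).map Sum.inl by simp,
        fcheckX_of_dropA_nil _ _ _ _ (dropA_map_inl _), takeA_map_inl, hmm]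
    | cons y t'' =>
      -- Case B
      simp only [List.headI_cons] at hmm
      have hz_n : (y :: t'').getLastD [] ∈ L := by
        have h0 := isc_last_mem ht
        simp only [List.getLastD_cons] at h0 ⊢
        exact h0
      cases m with
      | nil => exact absurd rfl hmne
      | cons m₀ m' =>
      obtain ⟨r0, rs, hr⟩ : ∃ r0 rs,
          rep (((y :: t'').dropLast.map f).prod) = r0 :: rs := by
        rcases hl : rep (((y :: t'').dropLast.map f).prod) with _ | ⟨r0, rs⟩
        · exact absurd hl (hrepne _)
        · exact ⟨r0, rs, rfl⟩
      rw [show ([c] : List (List A)).dropLast ++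
            ((m₀ :: m') ++ (b :: y :: t'').tail)
          = m₀ :: (m' ++ (y :: t'')) by simp]
      rw [checkOfSeq_cons f rep m₀ (by simp), checkOfSeq_singleton,
        checkOfSeq_cons f rep b (by simp)]
      have hdrop : dropA (c.map Sum.inl ++ (b.map Sum.inl ++
          (rep (((y :: t'').dropLast.map f).prod)).map Sum.inr ++
          ((y :: t'').getLastD []).map Sum.inl)) =
          Sum.inr r0 :: (rs.map Sum.inr ++ ((y :: t'').getLastD []).map Sum.inl) := by
        rw [dropA_map_inl_append, List.append_assoc, dropA_map_inl_append,
          dropA_map_inr_append (hrepne _), hr]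
        simp
      have htake : takeA (c.map Sum.inl ++ (b.map Sum.inl ++
          (rep (((y :: t'').dropLast.map f).prod)).map Sum.inr ++
          ((y :: t'').getLastD []).map Sum.inl)) = c ++ b := by
        rw [takeA_map_inl_append, List.append_assoc, takeA_map_inl_append,
          takeA_map_inr_append (hrepne _), List.append_nil]
      rw [fcheckX_of_dropA_cons _ _ _ _ hdrop, htake]
      rw [show (Sum.inr r0 : A ⊕ A_G) ::
            (rs.map Sum.inr ++ ((y :: t'').getLastD []).map Sum.inl)
          = (r0 :: rs).map Sum.inr ++ ((y :: t'').getLastD []).map Sum.inl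
          by simp]
      rw [midRun_last L f evA _ _ (by simp), ← hr, hrep,
        acuteG_of_mem hE hFac hA f hz_n, acuteWord_of_mem hE hFac hA hz_n,
        show graveWord L (c ++ b) = m₀ by unfold graveWord; rw [hmm]; rfl,
        show graveG L f (c ++ b) = (m'.map f).prod by unfold graveG; rw [hmm]; rfl,
        show (m' ++ y :: t'').dropLast = m' ++ (y :: t'').dropLast from
          List.dropLast_append_of_ne_nil (l := y :: t'') (by simp),
        show (m' ++ y :: t'').getLastD [] = (y :: t'').getLastD [] from
          getLastD_append_cons m' y t'' [],
        List.map_append, List.prod_append, mul_one]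
  | cons x s'' =>
    cases t' with
    | nil =>
      -- Case C
      simp only [List.getLastD_cons, List.headI_cons] at hmm
      have haL : s''.getLastD x ∈ L := by
        have h0 := isc_last_mem hs
        simp only [List.getLastD_cons] at h0
        exact h0
      cases m with
      | nil => exact absurd rfl hmne
      | cons m₀ m' =>
      obtain ⟨r0, rs, hr⟩ : ∃ r0 rs,
          rep (((x :: s'').dropLast.map f).prod) = r0 :: rs := by
        rcases hl : rep (((x :: s'').dropLast.map f).prod) with _ | ⟨r0, rs⟩
        · exact absurd hl (hrepne _)
        · exact ⟨r0, rs, rfl⟩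
      rw [show (c :: x :: s'').dropLast ++
            ((m₀ :: m') ++ ([b] : List (List A)).tail)
          = c :: ((x :: s'').dropLast ++ (m₀ :: m')) by simp]
      rw [checkOfSeq_cons f rep c (rest := (x :: s'').dropLast ++ (m₀ :: m'))
          (by simp),
        checkOfSeq_cons f rep c (rest := x :: s'') (by simp),
        checkOfSeq_singleton]
      simp only [List.getLastD_cons]
      rw [show (c.map Sum.inl ++
            (rep (((x :: s'').dropLast.map f).prod)).map Sum.inr ++
            (s''.getLastD x).map Sum.inl) ++ b.map Sum.inl
          = c.map Sum.inl ++ ((rep (((x :: s'').dropLast.map f).prod)).map Sum.inr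
              ++ (s''.getLastD x ++ b).map Sum.inl) by simp]
      have hdrop : dropA (c.map Sum.inl ++
          ((rep (((x :: s'').dropLast.map f).prod)).map Sum.inr
            ++ (s''.getLastD x ++ b).map Sum.inl)) =
          Sum.inr r0 :: (rs.map Sum.inr ++ (s''.getLastD x ++ b).map Sum.inl) := by
        rw [dropA_map_inl_append, dropA_map_inr_append (hrepne _), hr]
        simp
      have htake : takeA (c.map Sum.inl ++
          ((rep (((x :: s'').dropLast.map f).prod)).map Sum.inr
            ++ (s''.getLastD x ++ b).map Sum.inl)) = c := by
        rw [takeA_map_inl_append, takeA_map_inr_append (hrepne _), List.append_nil]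
      rw [fcheckX_of_dropA_cons _ _ _ _ hdrop, htake]
      rw [show (Sum.inr r0 : A ⊕ A_G) ::
            (rs.map Sum.inr ++ (s''.getLastD x ++ b).map Sum.inl)
          = (r0 :: rs).map Sum.inr ++ (s''.getLastD x ++ b).map Sum.inl by simp]
      rw [midRun_last L f evA _ _ (by simp), ← hr, hrep,
        show acuteG L f (s''.getLastD x ++ b) = ((m₀ :: m').dropLast.map f).prod
          by unfold acuteG; rw [hmm],
        show acuteWord L (s''.getLastD x ++ b) = (m₀ :: m').getLastD []
          by unfold acuteWord; rw [hmm],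
        graveWord_of_mem hE hFac hA hcL, graveG_of_mem hE hFac hA f hcL,
        show ((x :: s'').dropLast ++ m₀ :: m').dropLast
            = (x :: s'').dropLast ++ (m₀ :: m').dropLast from
          List.dropLast_append_of_ne_nil (l := m₀ :: m') (by simp),
        getLastD_append_cons ((x :: s'').dropLast) m₀ m' [],
        List.map_append, List.prod_append, one_mul]
    | cons y t'' =>
      -- Case D
      simp only [List.getLastD_cons, List.headI_cons] at hmm
      have haL : s''.getLastD x ∈ L := by
        have h0 := isc_last_mem hs
        simp only [List.getLastD_cons] at h0
        exact h0
      have hz_n : t''.getLastD y ∈ L := by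
        have h0 := isc_last_mem ht
        simp only [List.getLastD_cons] at h0
        exact h0
      have hbne' : b ≠ [] := by simpa using hbne
      cases m with
      | nil => exact absurd rfl hmne
      | cons m₀ m' =>
      obtain ⟨r0, rs, hr1⟩ : ∃ r0 rs,
          rep (((x :: s'').dropLast.map f).prod) = r0 :: rs := by
        rcases hl : rep (((x :: s'').dropLast.map f).prod) with _ | ⟨r0, rs⟩
        · exact absurd hl (hrepne _)
        · exact ⟨r0, rs, rfl⟩
      obtain ⟨u0, us, hr2⟩ : ∃ u0 us,
          rep (((y :: t'').dropLast.map f).prod) = u0 :: us := by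
        rcases hl : rep (((y :: t'').dropLast.map f).prod) with _ | ⟨u0, us⟩
        · exact absurd hl (hrepne _)
        · exact ⟨u0, us, rfl⟩
      have hev2 : evalW evA (u0 :: us) = ((y :: t'').dropLast.map f).prod := by
        rw [← hr2]; exact hrep _
      rw [show (c :: x :: s'').dropLast ++
            ((m₀ :: m') ++ (b :: y :: t'').tail)
          = c :: ((x :: s'').dropLast ++ ((m₀ :: m') ++ (y :: t''))) by simp]
      rw [checkOfSeq_cons f rep c
            (rest := (x :: s'').dropLast ++ ((m₀ :: m') ++ (y :: t''))) (by simp),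
        checkOfSeq_cons f rep c (rest := x :: s'') (by simp),
        checkOfSeq_cons f rep b (rest := y :: t'') (by simp)]
      simp only [List.getLastD_cons]
      rw [hr2]
      rw [show (c.map Sum.inl ++
            (rep (((x :: s'').dropLast.map f).prod)).map Sum.inr ++
            (s''.getLastD x).map Sum.inl) ++
            (b.map Sum.inl ++ (u0 :: us).map Sum.inr ++
              (t''.getLastD y).map Sum.inl)
          = c.map Sum.inl ++
              ((rep (((x :: s'').dropLast.map f).prod)).map Sum.inr ++
                ((s''.getLastD x ++ b).map Sum.inl ++
                  ((u0 :: us).map Sum.inr ++ (t''.getLastD y).map Sum.inl)))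
          by simp]
      have hdrop : dropA (c.map Sum.inl ++
          ((rep (((x :: s'').dropLast.map f).prod)).map Sum.inr ++
            ((s''.getLastD x ++ b).map Sum.inl ++
              ((u0 :: us).map Sum.inr ++ (t''.getLastD y).map Sum.inl)))) =
          Sum.inr r0 :: (rs.map Sum.inr ++
            ((s''.getLastD x ++ b).map Sum.inl ++
              ((u0 :: us).map Sum.inr ++ (t''.getLastD y).map Sum.inl))) := by
        rw [dropA_map_inl_append, dropA_map_inr_append (hrepne _), hr1]
        simp
      have htake : takeA (c.map Sum.inl ++
          ((rep (((x :: s'').dropLast.map f).prod)).map Sum.inr ++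
            ((s''.getLastD x ++ b).map Sum.inl ++
              ((u0 :: us).map Sum.inr ++ (t''.getLastD y).map Sum.inl)))) = c := by
        rw [takeA_map_inl_append, takeA_map_inr_append (hrepne _), List.append_nil]
      rw [fcheckX_of_dropA_cons _ _ _ _ hdrop, htake]
      rw [show (Sum.inr r0 : A ⊕ A_G) :: (rs.map Sum.inr ++
            ((s''.getLastD x ++ b).map Sum.inl ++
              ((u0 :: us).map Sum.inr ++ (t''.getLastD y).map Sum.inl)))
          = (r0 :: rs).map Sum.inr ++
              ((s''.getLastD x ++ b).map Sum.inl ++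
                ((u0 :: us).map Sum.inr ++ (t''.getLastD y).map Sum.inl)) by simp]
      rw [midRun_two L f evA (r0 :: rs) (u0 :: us) (s''.getLastD x ++ b)
          (t''.getLastD y) (by simp [hbne']) (by simp)
          (by simp only [List.length_append, List.length_cons, List.length_map]
              omega),
        ← hr1, hrep, hev2,
        acuteG_of_mem hE hFac hA f hz_n, acuteWord_of_mem hE hFac hA hz_n,
        graveWord_of_mem hE hFac hA hcL, graveG_of_mem hE hFac hA f hcL,
        show fhat L f (s''.getLastD x ++ b) = ((m₀ :: m').map f).prod
          by unfold fhat; rw [hmm],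
        show ((x :: s'').dropLast ++ ((m₀ :: m') ++ y :: t'')).dropLast
            = (x :: s'').dropLast ++ ((m₀ :: m') ++ (y :: t'').dropLast) from by
          rw [List.dropLast_append_of_ne_nil (l := m₀ :: m' ++ y :: t'') (by simp),
            List.dropLast_append_of_ne_nil (l := y :: t'') (by simp)],
        show ((x :: s'').dropLast ++ ((m₀ :: m') ++ y :: t'')).getLastD []
            = t''.getLastD y from by
          rw [show (x :: s'').dropLast ++ ((m₀ :: m') ++ y :: t'')
              = ((x :: s'').dropLast ++ (m₀ :: m')) ++ y :: t'' by simp,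
            getLastD_append_cons, List.getLastD_cons]]
      simp [mul_assoc]
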